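/- arXiv:2604.27288 — 2 statements merged into one kernel-verified Lean document; each statement's English description precedes it below -/
import Mathlib

section
/- In the free product (Z/mZ) * (Z/nZ) * (Z/kZ) with m, n, k ≥ 2 and generators a, b, c, the subgroup generated by ab and ac is a free group of rank 2. In particular this group is large. -/
/-- A group `G` is large if some finite index subgroup surjects onto the free group `F₂`. -/
def IsLarge (G : Type*) [Group G] : Prop :=
  ∃ H : Subgroup G, H.index ≠ 0 ∧ ∃ f : H →* FreeGroup (Fin 2), Function.Surjective f

set_option linter.unusedSectionVars false
set_option linter.unusedVariables false

namespace Stmt11Aux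

open Monoid CoprodI Pointwise

section Part1
open Monoid CoprodI Pointwise

variable (m n k : ℕ)

abbrev V (m n k : ℕ) : Fin 3 → ℕ := ![m, n, k]
abbrev H3 (i : Fin 3) : Type := Multiplicative (ZMod (V m n k i))

def GG := Monoid.Coprod (Multiplicative (ZMod m))
      (Monoid.Coprod (Multiplicative (ZMod n)) (Multiplicative (ZMod k)))

instance : Group (GG m n k) := by unfold GG; infer_instance

def φ : GG m n k →* CoprodI (H3 m n k) :=
  Coprod.lift (@CoprodI.of (Fin 3) (H3 m n k) _ 0)
    (Coprod.lift (@CoprodI.of (Fin 3) (H3 m n k) _ 1) (@CoprodI.of (Fin 3) (H3 m n k) _ 2))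

def fi : ∀ i : Fin 3, H3 m n k i →* GG m n k :=
  Fin.cons Coprod.inl (Fin.cons (Coprod.inr.comp Coprod.inl)
    (Fin.cons (Coprod.inr.comp Coprod.inr) (fun i => i.elim0)))

def ψ : CoprodI (H3 m n k) →* GG m n k := CoprodI.lift (fi m n k)

def e : GG m n k ≃* CoprodI (H3 m n k) :=
  MonoidHom.toMulEquiv (φ m n k) (ψ m n k)
    (by
      apply Coprod.hom_ext
      · ext x; rfl
      · apply Coprod.hom_ext <;> ext x <;> rfl)
    (by
      apply CoprodI.ext_hom
      intro i
      induction i using Fin.cases with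
      | zero => ext x; rfl
      | succ i =>
        induction i using Fin.cases with
        | zero => ext x; rfl
        | succ i =>
          induction i using Fin.cases with
          | zero => ext x; rfl
          | succ i => exact i.elim0)

variable (m n k : ℕ)

def genA : H3 m n k 0 := Multiplicative.ofAdd 1
def gen2 (i : Fin 2) : H3 m n k (Fin.succ i) := Multiplicative.ofAdd 1

def tgen (i : Fin 2) : CoprodI (H3 m n k) :=
  CoprodI.of (genA m n k) * CoprodI.of (gen2 m n k i)

lemma ofAdd_ne_one' {N : ℕ} (x : ZMod N) (hx : x ≠ 0) :
    (Multiplicative.ofAdd x : Multiplicative (ZMod N)) ≠ 1 := by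
  simpa using hx

lemma zmod_one_ne_zero {N : ℕ} (hN : 2 ≤ N) : (1 : ZMod N) ≠ 0 := by
  haveI : Fact (1 < N) := ⟨hN⟩
  exact one_ne_zero

variable (hm : 2 ≤ m) (hn : 2 ≤ n) (hk : 2 ≤ k)

include hn hk in
lemma vsucc_ge (i : Fin 2) : 2 ≤ V m n k (Fin.succ i) := by
  induction i using Fin.cases with
  | zero => exact hn
  | succ i =>
    induction i using Fin.cases with
    | zero => exact hk
    | succ i => exact i.elim0

include hm in
lemma genA_ne_one : genA m n k ≠ 1 :=
  ofAdd_ne_one' _ (zmod_one_ne_zero hm)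

include hn hk in
lemma gen2_ne_one (i : Fin 2) : gen2 m n k i ≠ 1 :=
  ofAdd_ne_one' _ (zmod_one_ne_zero (vsucc_ge m n k hn hk i))

def XX (i : Fin 2) : Set (Word (H3 m n k)) :=
  {w | ∃ (x : H3 m n k 0) (y : H3 m n k (Fin.succ i)) (l : List (Σ j, H3 m n k j)),
    w.toList = ⟨0, x⟩ :: ⟨Fin.succ i, y⟩ :: l}

def YY (i : Fin 2) : Set (Word (H3 m n k)) :=
  {w | ∃ (y : H3 m n k (Fin.succ i)) (l : List (Σ j, H3 m n k j)),
    w.toList = ⟨Fin.succ i, y⟩ :: l}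

lemma smul_toList {i : Fin 3} (y : H3 m n k i) (hy : y ≠ 1) (w : Word (H3 m n k))
    (hw : w.fstIdx ≠ some i) :
    (CoprodI.of y • w).toList = ⟨i, y⟩ :: w.toList := by
  rw [← Word.cons_eq_smul (h1 := hw) (h2 := hy)]
  rfl

lemma fstIdx_some {w : Word (H3 m n k)} {j : Fin 3} (h : w.fstIdx = some j) :
    ∃ y l, w.toList = ⟨j, y⟩ :: l := by
  rcases w with ⟨list, h1, h2⟩
  cases list with
  | nil => simp [Word.fstIdx] at h
  | cons p l =>
    simp only [Word.fstIdx, List.head?] at h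
    obtain rfl : p.1 = j := by simpa using h
    exact ⟨p.2, l, rfl⟩

lemma fstIdx_of_toList {w : Word (H3 m n k)} {j : Fin 3} {y l}
    (h : w.toList = ⟨j, y⟩ :: l) : w.fstIdx = some j := by
  simp [Word.fstIdx, h]

include hm hn hk in
lemma hX : ∀ i, tgen m n k i • (YY m n k i)ᶜ ⊆ XX m n k i := by
  intro i
  rintro _ ⟨w, hw, rfl⟩
  have h1 : w.fstIdx ≠ some (Fin.succ i) := by
    intro h
    obtain ⟨y, l, hl⟩ := fstIdx_some m n k h
    exact hw ⟨y, l, hl⟩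
  have hg : gen2 m n k i ≠ 1 := gen2_ne_one m n k hn hk i
  have inner : (CoprodI.of (gen2 m n k i) • w).toList = ⟨Fin.succ i, gen2 m n k i⟩ :: w.toList :=
    smul_toList m n k _ hg w h1
  have h2 : (CoprodI.of (gen2 m n k i) • w).fstIdx ≠ some 0 := by
    rw [fstIdx_of_toList m n k inner]
    intro h
    exact Fin.succ_ne_zero i (by simpa using h)
  have outer : (tgen m n k i • w).toList =
      ⟨0, genA m n k⟩ :: ⟨Fin.succ i, gen2 m n k i⟩ :: w.toList := by
    rw [tgen, mul_smul, smul_toList m n k _ (genA_ne_one m n k hm) _ h2, inner]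
  exact ⟨genA m n k, gen2 m n k i, w.toList, outer⟩

include hm hn hk in
lemma hY : ∀ i, (tgen m n k ·)⁻¹ i • (XX m n k i)ᶜ ⊆ YY m n k i := by
  intro i
  rintro _ ⟨w, hw, rfl⟩
  have hginv : (gen2 m n k i)⁻¹ ≠ 1 := inv_ne_one.mpr (gen2_ne_one m n k hn hk i)
  have key : ∀ u : Word (H3 m n k), u.fstIdx ≠ some (Fin.succ i) →
      CoprodI.of (gen2 m n k i)⁻¹ • u ∈ YY m n k i := by
    intro u hu
    exact ⟨(gen2 m n k i)⁻¹, u.toList, smul_toList m n k _ hginv u hu⟩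
  have expand : (tgen m n k ·)⁻¹ i • w
      = CoprodI.of (gen2 m n k i)⁻¹ • (CoprodI.of (genA m n k)⁻¹ • w) := by
    show (tgen m n k i)⁻¹ • w = _
    rw [tgen, mul_inv_rev, ← map_inv, ← map_inv, mul_smul]
  show (fun x => tgen m n k x)⁻¹ i • w ∈ YY m n k i
  rw [expand]
  -- main claim: fstIdx (of A⁻¹ • w) ≠ some i.succ
  have hAinv : (genA m n k)⁻¹ ≠ 1 := inv_ne_one.mpr (genA_ne_one m n k hm)
  apply key
  induction w using Word.consRecOn with
  | empty =>
    rw [fstIdx_of_toList m n k (smul_toList m n k _ hAinv Word.empty (by simp [Word.fstIdx]))]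
    intro h
    exact Fin.succ_ne_zero i (by simpa using h.symm)
  | cons j x w' hfst hne _ =>
    by_cases hj : j = 0
    · subst hj
      rw [Word.cons_eq_smul, smul_smul, ← map_mul]
      by_cases hone : (genA m n k)⁻¹ * x = 1
      · rw [hone, map_one, one_smul]
        intro hcontra
        obtain ⟨y, l, hl⟩ := fstIdx_some m n k hcontra
        refine hw ⟨x, y, l, ?_⟩
        show (⟨(0 : Fin 3), x⟩ :: w'.toList : List _) = _
        rw [hl]
      · rw [fstIdx_of_toList m n k (smul_toList m n k _ hone w' hfst)]
        intro h
        exact Fin.succ_ne_zero i (by simpa using h.symm)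
    · have hfst0 : (Word.cons x w' hfst hne).fstIdx ≠ some 0 := by
        rw [fstIdx_of_toList m n k (show (Word.cons x w' hfst hne).toList = ⟨j, x⟩ :: w'.toList from rfl)]
        simpa using hj
      rw [fstIdx_of_toList m n k (smul_toList m n k _ hAinv _ hfst0)]
      intro h
      exact Fin.succ_ne_zero i (by simpa using h.symm)

include hm hn hk in
lemma hXnonempty : ∀ i, (XX m n k i).Nonempty := by
  intro i
  refine ⟨tgen m n k i • Word.empty, hX m n k hm hn hk i ?_⟩
  refine Set.smul_mem_smul_set ?_
  rintro ⟨y, l, hl⟩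
  simp at hl

lemma hXdisj : Pairwise (Function.onFun Disjoint (XX m n k)) := by
  intro i j hij
  rw [Function.onFun, Set.disjoint_left]
  rintro w ⟨x, y, l, h1⟩ ⟨x', y', l', h2⟩
  rw [h1] at h2
  have := (List.cons.injEq _ _ _ _).mp h2
  have h3 := (List.cons.injEq _ _ _ _).mp this.2
  exact hij (Fin.succ_injective _ (congrArg Sigma.fst h3.1.symm)).symm

lemma hYdisj : Pairwise (Function.onFun Disjoint (YY m n k)) := by
  intro i j hij
  rw [Function.onFun, Set.disjoint_left]
  rintro w ⟨y, l, h1⟩ ⟨y', l', h2⟩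
  rw [h1] at h2
  have h3 := (List.cons.injEq _ _ _ _).mp h2
  exact hij (Fin.succ_injective _ (congrArg Sigma.fst h3.1.symm)).symm

lemma hXYdisj : ∀ i j, Disjoint (XX m n k i) (YY m n k j) := by
  intro i j
  rw [Set.disjoint_left]
  rintro w ⟨x, y, l, h1⟩ ⟨y', l', h2⟩
  rw [h1] at h2
  have h3 := (List.cons.injEq _ _ _ _).mp h2
  exact Fin.succ_ne_zero j (congrArg Sigma.fst h3.1.symm)

include hm hn hk in
theorem tgen_free : Function.Injective (FreeGroup.lift (tgen m n k)) := by
  classical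
  exact FreeGroup.injective_lift_of_ping_pong (tgen m n k) (XX m n k) (YY m n k)
    (hXnonempty m n k hm hn hk) (hXdisj m n k) (hYdisj m n k) (hXYdisj m n k)
    (hX m n k hm hn hk) (hY m n k hm hn hk)

-- the elements a b c of GG
def aa : GG m n k := Coprod.inl (Multiplicative.ofAdd 1)
def bb : GG m n k := Coprod.inr (Coprod.inl (Multiplicative.ofAdd 1))
def cc : GG m n k := Coprod.inr (Coprod.inr (Multiplicative.ofAdd 1))

lemma esymm_tgen (i : Fin 2) :
    (e m n k).symm (tgen m n k i) = aa m n k * ((Fin.cons (bb m n k) (Fin.cons (cc m n k) (fun j => j.elim0)) : Fin 2 → GG m n k) i) := by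
  induction i using Fin.cases with
  | zero => rfl
  | succ i =>
    induction i using Fin.cases with
    | zero => rfl
    | succ i => exact i.elim0

def FF : FreeGroup (Fin 2) →* GG m n k :=
  (e m n k).symm.toMonoidHom.comp (FreeGroup.lift (tgen m n k))

include hm hn hk in
lemma FF_inj : Function.Injective (FF m n k) :=
  (e m n k).symm.injective.comp (tgen_free m n k hm hn hk)

lemma FF_range : (FF m n k).range
    = Subgroup.closure {aa m n k * bb m n k, aa m n k * cc m n k} := by
  have h1 : (FF m n k).range = Subgroup.map (e m n k).symm.toMonoidHom (FreeGroup.lift (tgen m n k)).range := by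
    unfold FF
    rw [MonoidHom.range_eq_map, MonoidHom.range_eq_map, ← Subgroup.map_map]
  rw [h1, FreeGroup.range_lift_eq_closure, MonoidHom.map_closure]
  congr 1
  ext g
  simp only [Set.mem_image, Set.mem_range]
  constructor
  · rintro ⟨_, ⟨i, rfl⟩, rfl⟩
    show (e m n k).symm (tgen m n k i) ∈ _
    rw [esymm_tgen]
    induction i using Fin.cases with
    | zero => left; rfl
    | succ i =>
      induction i using Fin.cases with
      | zero => right; rfl
      | succ i => exact i.elim0
  · rintro (rfl | rfl)
    · exact ⟨tgen m n k 0, ⟨0, rfl⟩, esymm_tgen m n k 0⟩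
    · exact ⟨tgen m n k 1, ⟨1, rfl⟩, esymm_tgen m n k 1⟩

include hm hn hk in
noncomputable def part1 :
    (Subgroup.closure {aa m n k * bb m n k, aa m n k * cc m n k}) ≃* FreeGroup (Fin 2) :=
  (MulEquiv.subgroupCongr (FF_range m n k).symm).trans
    (MonoidHom.ofInjective (FF_inj m n k hm hn hk)).symm

end Part1

section Cyc
variable {W : Type*} [Group W]

/-- hom from `Multiplicative (ZMod N)` sending the generator to an element of order dividing N -/
def cyc (N : ℕ) [NeZero N] (w : W) (hw : w ^ N = 1) : Multiplicative (ZMod N) →* W where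
  toFun u := w ^ (Multiplicative.toAdd u).val
  map_one' := by simp
  map_mul' u v := by
    show w ^ (Multiplicative.toAdd u + Multiplicative.toAdd v).val = _
    rw [ZMod.val_add, ← pow_eq_pow_mod _ hw, pow_add]

lemma cyc_gen (N : ℕ) (hN : 2 ≤ N) (w : W) (hw : w ^ N = 1) :
    haveI : NeZero N := ⟨by omega⟩
    cyc N w hw (Multiplicative.ofAdd 1) = w := by
  haveI : NeZero N := ⟨by omega⟩
  haveI : Fact (1 < N) := ⟨hN⟩
  show w ^ (Multiplicative.toAdd (Multiplicative.ofAdd (1 : ZMod N))).val = w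
  rw [toAdd_ofAdd, ZMod.val_one, pow_one]
end Cyc

section Lists
variable {Γ : Type*} [Group Γ]

lemma list_prod_support_none (g : ℕ → Γ) (nn : ℕ) (hg : ∀ i, i < nn → g i = 1) :
    ((List.range nn).map g).prod = 1 := by
  induction nn with
  | zero => simp
  | succ s ih =>
    rw [List.range_succ]
    simp only [List.map_append, List.prod_append, List.map_cons, List.prod_cons, List.map_nil,
      List.prod_nil]
    rw [ih (fun i hi => hg i (by omega)), hg s (by omega)]
    simp

lemma list_prod_support_one (g : ℕ → Γ) (p nn : ℕ) (hp : p < nn)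
    (hg : ∀ i, i < nn → i ≠ p → g i = 1) :
    ((List.range nn).map g).prod = g p := by
  induction nn with
  | zero => omega
  | succ s ih =>
    rw [List.range_succ]
    simp only [List.map_append, List.prod_append, List.map_cons, List.prod_cons, List.map_nil,
      List.prod_nil]
    by_cases hps : p = s
    · subst hps
      rw [list_prod_support_none g p (fun i hi => hg i (by omega) (by omega))]
      simp
    · rw [ih (by omega) (fun i hi hip => hg i (by omega) hip), hg s (by omega) (Ne.symm hps)]
      simp

lemma list_prod_support_two (g : ℕ → Γ) (p q nn : ℕ) (hpq : p < q) (hq : q < nn)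
    (hg : ∀ i, i < nn → i ≠ p → i ≠ q → g i = 1) :
    ((List.range nn).map g).prod = g p * g q := by
  induction nn with
  | zero => omega
  | succ s ih =>
    rw [List.range_succ]
    simp only [List.map_append, List.prod_append, List.map_cons, List.prod_cons, List.map_nil,
      List.prod_nil]
    by_cases hqs : q = s
    · subst hqs
      rw [list_prod_support_one g p q (by omega) (fun i hi hip => hg i (by omega) hip (by omega))]
      simp
    · rw [ih (by omega) (fun i hi hip hiq => hg i (by omega) hip hiq), hg s (by omega) (by omega) (Ne.symm hqs)]
      simp

/-- the key cyclic cancellation -/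
lemma cyc_prod (x : Γ) (nn : ℕ) (hnn : 2 ≤ nn) (u : ZMod nn) :
    haveI : NeZero nn := ⟨by omega⟩
    ((List.range nn).map (fun (r : ℕ) => if u - (r : ZMod nn) = 0 then x
      else if u - (r : ZMod nn) = 1 then x⁻¹ else 1)).prod = 1 := by
  haveI : NeZero nn := ⟨by omega⟩
  haveI : Fact (1 < nn) := ⟨hnn⟩
  have hval : ∀ (v : ZMod nn) (r : ℕ), r < nn → ((r : ZMod nn) = v ↔ r = v.val) := by
    intro v r hr
    constructor
    · intro h; rw [← h, ZMod.val_cast_of_lt hr]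
    · intro h; rw [h, ZMod.natCast_val, ZMod.cast_id]
  have hone : (1 : ZMod nn) ≠ 0 := one_ne_zero
  set g : ℕ → Γ := fun r => if u - (r : ZMod nn) = 0 then x
      else if u - (r : ZMod nn) = 1 then x⁻¹ else 1 with hgdef
  have hgp : ∀ r : ℕ, r < nn → (u - (r : ZMod nn) = 0 ↔ r = u.val) := by
    intro r hr
    rw [sub_eq_zero, eq_comm]
    exact hval u r hr
  have hgq : ∀ r : ℕ, r < nn → (u - (r : ZMod nn) = 1 ↔ r = (u - 1).val) := by
    intro r hr
    rw [← hval (u - 1) r hr]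
    constructor
    · intro h; linear_combination -h
    · intro h; linear_combination -h
  have hp : u.val < nn := ZMod.val_lt u
  have hq : (u - 1).val < nn := ZMod.val_lt _
  have hpq : u.val ≠ (u - 1).val := by
    intro h
    have h2 : u = u - 1 := by
      have h1 := congrArg (fun r : ℕ => (r : ZMod nn)) h
      simpa [ZMod.natCast_val, ZMod.cast_id] using h1
    exact hone (by linear_combination h2)
  have gval_p : g u.val = x := by
    rw [hgdef]
    simp only []
    rw [if_pos ((hgp u.val hp).mpr rfl)]
  have gval_q : g ((u - 1).val) = x⁻¹ := by
    rw [hgdef]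
    simp only []
    rw [if_neg (fun hc => hpq ((hgp _ hq).mp hc).symm), if_pos ((hgq _ hq).mpr rfl)]
  have gval_other : ∀ r, r < nn → r ≠ u.val → r ≠ (u - 1).val → g r = 1 := by
    intro r hr h1 h2
    rw [hgdef]
    simp only []
    rw [if_neg (fun hc => h1 ((hgp r hr).mp hc)), if_neg (fun hc => h2 ((hgq r hr).mp hc))]
  rcases lt_or_gt_of_ne hpq with hlt | hgt
  · rw [list_prod_support_two g u.val ((u-1).val) nn hlt hq gval_other, gval_p, gval_q,
      mul_inv_cancel]
  · rw [list_prod_support_two g ((u-1).val) u.val nn hgt hp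
      (fun i hi h1 h2 => gval_other i hi h2 h1), gval_p, gval_q, inv_mul_cancel]
end Lists

section Wreath
variable (m n k : ℕ) [NeZero m] [NeZero n] [NeZero k]

abbrev SS (m n k : ℕ) : Type := ZMod m × ZMod n × ZMod k
abbrev NN (m n k : ℕ) : Type := SS m n k → FreeGroup (Fin 2)

def shiftAut (s : SS m n k) : NN m n k ≃* NN m n k where
  toFun f := fun t => f (t - s)
  invFun f := fun t => f (t + s)
  left_inv f := by funext t; simp
  right_inv f := by funext t; simp
  map_mul' f g := rfl

def shiftHom : Multiplicative (SS m n k) →* MulAut (NN m n k) where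
  toFun s := shiftAut m n k (Multiplicative.toAdd s)
  map_one' := by
    refine MulEquiv.ext fun f => funext fun t => ?_
    simp [shiftAut]
  map_mul' s s' := by
    refine MulEquiv.ext fun f => funext fun t => ?_
    simp [shiftAut, sub_sub]

abbrev WW (m n k : ℕ) [NeZero m] [NeZero n] [NeZero k] : Type :=
  SemidirectProduct (NN m n k) (Multiplicative (SS m n k)) (shiftHom m n k)

lemma mk_pow (f : NN m n k) (s : Multiplicative (SS m n k)) (j : ℕ) :
    ((⟨f, s⟩ : WW m n k) ^ j) =
      ⟨fun t => ((List.range j).map (fun (r : ℕ) => f (t - r • Multiplicative.toAdd s))).prod,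
        s ^ j⟩ := by
  induction j with
  | zero =>
    refine SemidirectProduct.ext ?_ ?_ <;> simp <;> rfl
  | succ j ih =>
    rw [pow_succ, ih, SemidirectProduct.mul_def]
    refine SemidirectProduct.ext ?_ ?_
    · show _ = _
      funext t
      simp only [List.range_succ, List.map_append, List.prod_append, List.map_cons,
        List.prod_cons, List.map_nil, List.prod_nil, mul_one, Pi.mul_apply]
      congr 1
    · exact (pow_succ s j).symm

def fwb : NN m n k := fun t =>
  if t.1 = 0 then
    (if t.2.1 = 0 then FreeGroup.of 0 else if t.2.1 = 1 then (FreeGroup.of 0)⁻¹ else 1)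
  else 1

def fwc : NN m n k := fun t =>
  if t.1 = 0 then
    (if t.2.2 = 0 then FreeGroup.of 1 else if t.2.2 = 1 then (FreeGroup.of 1)⁻¹ else 1)
  else 1

def wa : WW m n k := SemidirectProduct.inr (Multiplicative.ofAdd (1, 0, 0))
def wb : WW m n k := ⟨fwb m n k, Multiplicative.ofAdd (0, 1, 0)⟩
def wc : WW m n k := ⟨fwc m n k, Multiplicative.ofAdd (0, 0, 1)⟩

lemma wa_pow : wa m n k ^ m = 1 := by
  rw [wa, ← map_pow]
  convert map_one (SemidirectProduct.inr (φ := shiftHom m n k))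
  show Multiplicative.ofAdd _ ^ m = 1
  rw [← ofAdd_nsmul]
  convert ofAdd_zero
  simp [Prod.ext_iff, ZMod.natCast_self]

lemma wb_pow (hn : 2 ≤ n) : wb m n k ^ n = 1 := by
  rw [wb, mk_pow]
  refine SemidirectProduct.ext ?_ ?_
  · show _ = (1 : NN m n k)
    funext t
    obtain ⟨t1, t2, t3⟩ := t
    show (List.map _ (List.range n)).prod = 1
    have hsm : ∀ r : ℕ, r • ((0 : ZMod m), (1 : ZMod n), (0 : ZMod k))
        = ((0 : ZMod m), (r : ZMod n), (0 : ZMod k)) := by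
      intro r
      simp [Prod.ext_iff, nsmul_eq_mul]
    by_cases ht1 : t1 = 0
    · subst ht1
      have heq : (fun (r : ℕ) => fwb m n k ((0, t2, t3) - r • Multiplicative.toAdd
          (Multiplicative.ofAdd ((0 : ZMod m), (1 : ZMod n), (0 : ZMod k)))))
          = (fun (r : ℕ) => if t2 - (r : ZMod n) = 0 then FreeGroup.of 0
              else if t2 - (r : ZMod n) = 1 then (FreeGroup.of 0)⁻¹ else 1) := by
        funext r
        show fwb m n k _ = _
        rw [toAdd_ofAdd, hsm r]
        simp [fwb, Prod.ext_iff]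
      rw [heq]
      exact cyc_prod (FreeGroup.of 0) n hn t2
    · apply list_prod_support_none
      intro i hi
      show fwb m n k _ = 1
      rw [toAdd_ofAdd, hsm i]
      simp [fwb, Prod.ext_iff, ht1]
  · show Multiplicative.ofAdd _ ^ n = 1
    rw [← ofAdd_nsmul]
    convert ofAdd_zero
    simp [Prod.ext_iff, nsmul_eq_mul, ZMod.natCast_self]

lemma wc_pow (hk : 2 ≤ k) : wc m n k ^ k = 1 := by
  rw [wc, mk_pow]
  refine SemidirectProduct.ext ?_ ?_
  · show _ = (1 : NN m n k)
    funext t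
    obtain ⟨t1, t2, t3⟩ := t
    show (List.map _ (List.range k)).prod = 1
    have hsm : ∀ r : ℕ, r • ((0 : ZMod m), (0 : ZMod n), (1 : ZMod k))
        = ((0 : ZMod m), (0 : ZMod n), (r : ZMod k)) := by
      intro r
      simp [Prod.ext_iff, nsmul_eq_mul]
    by_cases ht1 : t1 = 0
    · subst ht1
      have heq : (fun (r : ℕ) => fwc m n k ((0, t2, t3) - r • Multiplicative.toAdd
          (Multiplicative.ofAdd ((0 : ZMod m), (0 : ZMod n), (1 : ZMod k)))))
          = (fun (r : ℕ) => if t3 - (r : ZMod k) = 0 then FreeGroup.of 1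
              else if t3 - (r : ZMod k) = 1 then (FreeGroup.of 1)⁻¹ else 1) := by
        funext r
        show fwc m n k _ = _
        rw [toAdd_ofAdd, hsm r]
        simp [fwc, Prod.ext_iff]
      rw [heq]
      exact cyc_prod (FreeGroup.of 1) k hk t3
    · apply list_prod_support_none
      intro i hi
      show fwc m n k _ = 1
      rw [toAdd_ofAdd, hsm i]
      simp [fwc, Prod.ext_iff, ht1]
  · show Multiplicative.ofAdd _ ^ k = 1
    rw [← ofAdd_nsmul]
    convert ofAdd_zero
    simp [Prod.ext_iff, nsmul_eq_mul, ZMod.natCast_self]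
end Wreath

section Theta
variable (m n k : ℕ) [NeZero m] [NeZero n] [NeZero k]

lemma conj_left (f : NN m n k) (σa σb : Multiplicative (SS m n k)) :
    ((SemidirectProduct.inr σa * (⟨f, σb⟩ : WW m n k) * (SemidirectProduct.inr σa)⁻¹
      * (⟨f, σb⟩ : WW m n k)⁻¹).left) 0
    = f (0 - Multiplicative.toAdd σa) * (f 0)⁻¹ := by
  simp only [SemidirectProduct.mul_left, SemidirectProduct.mul_right, SemidirectProduct.inv_left, SemidirectProduct.inv_right, SemidirectProduct.left_inr, SemidirectProduct.right_inr]
  simp [shiftHom, shiftAut, -SemidirectProduct.mk_eq_inl_mul_inr]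

variable (hm : 2 ≤ m) (hn : 2 ≤ n) (hk : 2 ≤ k)

def Theta (hm : 2 ≤ m) (hn : 2 ≤ n) (hk : 2 ≤ k) : GG m n k →* WW m n k :=
  Monoid.Coprod.lift (cyc m (wa m n k) (wa_pow m n k))
    (Monoid.Coprod.lift (cyc n (wb m n k) (wb_pow m n k hn))
      (cyc k (wc m n k) (wc_pow m n k hk)))

def rho (hm : 2 ≤ m) (hn : 2 ≤ n) (hk : 2 ≤ k) : GG m n k →* Multiplicative (SS m n k) :=
  SemidirectProduct.rightHom.comp (Theta m n k hm hn hk)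

lemma Theta_a : Theta m n k hm hn hk (aa m n k) = wa m n k := by
  show Monoid.Coprod.lift _ _ (Monoid.Coprod.inl _) = _
  rw [Monoid.Coprod.lift_apply_inl]
  exact cyc_gen m hm _ _

lemma Theta_b : Theta m n k hm hn hk (bb m n k) = wb m n k := by
  show Monoid.Coprod.lift _ _ (Monoid.Coprod.inr (Monoid.Coprod.inl _)) = _
  rw [Monoid.Coprod.lift_apply_inr, Monoid.Coprod.lift_apply_inl]
  exact cyc_gen n hn _ _

lemma Theta_c : Theta m n k hm hn hk (cc m n k) = wc m n k := by
  show Monoid.Coprod.lift _ _ (Monoid.Coprod.inr (Monoid.Coprod.inr _)) = _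
  rw [Monoid.Coprod.lift_apply_inr, Monoid.Coprod.lift_apply_inr]
  exact cyc_gen k hk _ _

def u1 : GG m n k := aa m n k * bb m n k * (aa m n k)⁻¹ * (bb m n k)⁻¹
def u2 : GG m n k := aa m n k * cc m n k * (aa m n k)⁻¹ * (cc m n k)⁻¹

lemma comm_mem (x y : GG m n k) :
    x * y * x⁻¹ * y⁻¹ ∈ (rho m n k hm hn hk).ker := by
  rw [MonoidHom.mem_ker]
  simp only [map_mul, map_inv]
  rw [mul_comm (rho m n k hm hn hk x) (rho m n k hm hn hk y)]
  group

lemma Theta_u1_left : (Theta m n k hm hn hk (u1 m n k)).left 0 = (FreeGroup.of 0)⁻¹ := by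
  have h : Theta m n k hm hn hk (u1 m n k)
      = SemidirectProduct.inr (Multiplicative.ofAdd (1, 0, 0)) * (⟨fwb m n k, Multiplicative.ofAdd (0, 1, 0)⟩ : WW m n k)
        * (SemidirectProduct.inr (Multiplicative.ofAdd (1, 0, 0)))⁻¹
        * (⟨fwb m n k, Multiplicative.ofAdd (0, 1, 0)⟩ : WW m n k)⁻¹ := by
    rw [u1]
    simp only [map_mul, map_inv, Theta_a m n k hm hn hk, Theta_b m n k hm hn hk]
    rfl
  rw [h, conj_left]
  have h1 : ((0 : SS m n k) - Multiplicative.toAdd (Multiplicative.ofAdd ((1 : ZMod m), (0 : ZMod n), (0 : ZMod k))))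
      = ((-1 : ZMod m), (0 : ZMod n), (0 : ZMod k)) := by
    simp [Prod.ext_iff]
  rw [h1]
  have hm1 : (-1 : ZMod m) ≠ 0 := by
    haveI : Fact (1 < m) := ⟨hm⟩
    simp [neg_eq_zero]
  have h2 : fwb m n k ((-1 : ZMod m), (0 : ZMod n), (0 : ZMod k)) = 1 := by
    simp [fwb, hm1]
  have h3 : fwb m n k 0 = FreeGroup.of 0 := by
    simp [fwb, Prod.ext_iff]
  rw [h2, h3, one_mul]

lemma Theta_u2_left : (Theta m n k hm hn hk (u2 m n k)).left 0 = (FreeGroup.of 1)⁻¹ := by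
  have h : Theta m n k hm hn hk (u2 m n k)
      = SemidirectProduct.inr (Multiplicative.ofAdd (1, 0, 0)) * (⟨fwc m n k, Multiplicative.ofAdd (0, 0, 1)⟩ : WW m n k)
        * (SemidirectProduct.inr (Multiplicative.ofAdd (1, 0, 0)))⁻¹
        * (⟨fwc m n k, Multiplicative.ofAdd (0, 0, 1)⟩ : WW m n k)⁻¹ := by
    rw [u2]
    simp only [map_mul, map_inv, Theta_a m n k hm hn hk, Theta_c m n k hm hn hk]
    rfl
  rw [h, conj_left]
  have h1 : ((0 : SS m n k) - Multiplicative.toAdd (Multiplicative.ofAdd ((1 : ZMod m), (0 : ZMod n), (0 : ZMod k))))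
      = ((-1 : ZMod m), (0 : ZMod n), (0 : ZMod k)) := by
    simp [Prod.ext_iff]
  rw [h1]
  have hm1 : (-1 : ZMod m) ≠ 0 := by
    haveI : Fact (1 < m) := ⟨hm⟩
    simp [neg_eq_zero]
  have h2 : fwc m n k ((-1 : ZMod m), (0 : ZMod n), (0 : ZMod k)) = 1 := by
    simp [fwc, hm1]
  have h3 : fwc m n k 0 = FreeGroup.of 1 := by
    simp [fwc, Prod.ext_iff]
  rw [h2, h3, one_mul]

/-- the homomorphism from the kernel to F₂ -/
def fhom (hm : 2 ≤ m) (hn : 2 ≤ n) (hk : 2 ≤ k) :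
    (rho m n k hm hn hk).ker →* FreeGroup (Fin 2) where
  toFun h := (Theta m n k hm hn hk h.1).left 0
  map_one' := by simp
  map_mul' h1 h2 := by
    have hr : (Theta m n k hm hn hk h1.1).right = 1 := h1.2
    show (Theta m n k hm hn hk (h1.1 * h2.1)).left 0 = _
    rw [map_mul, SemidirectProduct.mul_left, hr, map_one]
    rfl

lemma ker_index_ne (hm : 2 ≤ m) (hn : 2 ≤ n) (hk : 2 ≤ k) :
    (rho m n k hm hn hk).ker.index ≠ 0 := by
  rw [Subgroup.index_ker]
  refine Nat.card_ne_zero.mpr ⟨⟨⟨1, 1, map_one _⟩⟩, ?_⟩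
  infer_instance

lemma fhom_surj : Function.Surjective (fhom m n k hm hn hk) := by
  have h1 : FreeGroup.of (0 : Fin 2) ∈ (fhom m n k hm hn hk).range := by
    refine ⟨(⟨u1 m n k, comm_mem m n k hm hn hk _ _⟩ : (rho m n k hm hn hk).ker)⁻¹, ?_⟩
    rw [map_inv]
    have : fhom m n k hm hn hk ⟨u1 m n k, comm_mem m n k hm hn hk _ _⟩ = (FreeGroup.of 0)⁻¹ :=
      Theta_u1_left m n k hm hn hk
    rw [this, inv_inv]
  have h2 : FreeGroup.of (1 : Fin 2) ∈ (fhom m n k hm hn hk).range := by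
    refine ⟨(⟨u2 m n k, comm_mem m n k hm hn hk _ _⟩ : (rho m n k hm hn hk).ker)⁻¹, ?_⟩
    rw [map_inv]
    have : fhom m n k hm hn hk ⟨u2 m n k, comm_mem m n k hm hn hk _ _⟩ = (FreeGroup.of 1)⁻¹ :=
      Theta_u2_left m n k hm hn hk
    rw [this, inv_inv]
  intro g
  suffices hmem : g ∈ (fhom m n k hm hn hk).range by exact hmem
  induction g using FreeGroup.induction_on with
  | C1 => exact Subgroup.one_mem _
  | of i =>
    induction i using Fin.cases with
    | zero => exact h1
    | succ i =>
      induction i using Fin.cases with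
      | zero => exact h2
      | succ i => exact i.elim0
  | inv_of i hi => exact Subgroup.inv_mem _ hi
  | mul x y hx hy => exact Subgroup.mul_mem _ hx hy

include hm hn hk in
theorem isLargeGG : IsLarge (GG m n k) :=
  ⟨(rho m n k hm hn hk).ker, ker_index_ne m n k hm hn hk,
    fhom m n k hm hn hk, fhom_surj m n k hm hn hk⟩
end Theta

end Stmt11Aux

/-- In `(ℤ/mℤ) * (ℤ/nℤ) * (ℤ/kℤ)` with `m, n, k ≥ 2` and generators `a`, `b`, `c`,
the subgroup generated by `ab` and `ac` is free of rank `2`; in particular the group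
is large. -/
theorem stmt_11 (m n k : ℕ) (hm : 2 ≤ m) (hn : 2 ≤ n) (hk : 2 ≤ k) :
    let G := Monoid.Coprod (Multiplicative (ZMod m))
      (Monoid.Coprod (Multiplicative (ZMod n)) (Multiplicative (ZMod k)))
    let a : G := Monoid.Coprod.inl (Multiplicative.ofAdd 1)
    let b : G := Monoid.Coprod.inr (Monoid.Coprod.inl (Multiplicative.ofAdd 1))
    let c : G := Monoid.Coprod.inr (Monoid.Coprod.inr (Multiplicative.ofAdd 1))
    Nonempty ((Subgroup.closure {a * b, a * c}) ≃* FreeGroup (Fin 2)) ∧ IsLarge G := by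
  intro G a b c
  haveI : NeZero m := ⟨by omega⟩
  haveI : NeZero n := ⟨by omega⟩
  haveI : NeZero k := ⟨by omega⟩
  constructor
  · exact ⟨Stmt11Aux.part1 m n k hm hn hk⟩
  · exact Stmt11Aux.isLargeGG m n k hm hn hk
end

section
/- Let Γ be a finite simple graph and let v₁, v₂ be vertices forming a SIL, i.e. they are non-adjacent with distance at least 2, and there exists a connected component C of the induced subgraph on V(Γ) \ (Lk(v₁) ∩ Lk(v₂)) containing neither v₁ nor v₂. If z ∈ C, C₁ is the connected component of Γ \ St(v₁) containing z, and C₂ is the connected component of Γ \ St(v₂) containing z, then C₁ = C₂. -/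
/-- `ConnWithin Γ A z w` means `w` lies in the connected component of `z` in the
induced subgraph of `Γ` on the vertex set `A`: there is a walk from `z` to `w` all
of whose vertices lie in `A`. -/
def ConnWithin {V : Type*} (Γ : SimpleGraph V) (A : Set V) (z w : V) : Prop :=
  ∃ p : Γ.Walk z w, ∀ x ∈ p.support, x ∈ A

/-- Key step: a walk avoiding `St(v₁)` also avoids `St(v₂)`, provided `z` is not
connected to `v₂` within `(Lk(v₁) ∩ Lk(v₂))ᶜ` and `v₁, v₂` are non-adjacent. -/
lemma connWithin_mono_aux {V : Type*} (Γ : SimpleGraph V) (v₁ v₂ z w : V)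
    (hadj : ¬ Γ.Adj v₁ v₂)
    (hzv₂ : ¬ ConnWithin Γ ((Γ.neighborSet v₁ ∩ Γ.neighborSet v₂)ᶜ) z v₂)
    (h : ConnWithin Γ ((insert v₁ (Γ.neighborSet v₁))ᶜ) z w) :
    ConnWithin Γ ((insert v₂ (Γ.neighborSet v₂))ᶜ) z w := by
  haveI := Classical.decEq V
  obtain ⟨p, hp⟩ := h
  refine ⟨p, fun x hx => ?_⟩
  intro hxSt
  rcases Set.mem_insert_iff.mp hxSt with rfl | hxN
  · -- the walk reaches v₂ itself
    exact hzv₂ ⟨p.takeUntil x hx, fun y hy => by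
      have := hp y (p.support_takeUntil_subset hx hy)
      intro hy2
      exact this (Set.mem_insert_of_mem _ hy2.1)⟩
  · -- x is a neighbor of v₂; extend the prefix walk by the edge x—v₂
    have hxv₂ : Γ.Adj x v₂ := (Γ.mem_neighborSet v₂ x).mp hxN |>.symm
    refine hzv₂ ⟨(p.takeUntil x hx).concat hxv₂, fun y hy => ?_⟩
    rw [SimpleGraph.Walk.support_concat, List.mem_append] at hy
    rcases hy with hy | hy
    · have := hp y (p.support_takeUntil_subset hx hy)
      intro hy2
      exact this (Set.mem_insert_of_mem _ hy2.1)
    · simp only [List.mem_singleton] at hy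
      subst hy
      intro hy2
      exact hadj hy2.1

/-- If `{v₁, v₂ | z}` is a SIL in a finite simple graph `Γ` (i.e. `v₁`, `v₂` are
non-adjacent distinct vertices and `z` lies in a connected component of
`Γ \ (Lk(v₁) ∩ Lk(v₂))` containing neither `v₁` nor `v₂`), then the connected
component of `z` in `Γ \ St(v₁)` coincides with the connected component of `z` in
`Γ \ St(v₂)`. -/
theorem stmt_15 {V : Type*} [Fintype V] (Γ : SimpleGraph V) (v₁ v₂ z : V)
    (hne : v₁ ≠ v₂) (hadj : ¬ Γ.Adj v₁ v₂)
    (hz : z ∉ Γ.neighborSet v₁ ∩ Γ.neighborSet v₂)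
    (hzv₁ : ¬ ConnWithin Γ ((Γ.neighborSet v₁ ∩ Γ.neighborSet v₂)ᶜ) z v₁)
    (hzv₂ : ¬ ConnWithin Γ ((Γ.neighborSet v₁ ∩ Γ.neighborSet v₂)ᶜ) z v₂) :
    {w | ConnWithin Γ ((insert v₁ (Γ.neighborSet v₁))ᶜ) z w} =
      {w | ConnWithin Γ ((insert v₂ (Γ.neighborSet v₂))ᶜ) z w} := by
  ext w
  constructor
  · exact fun h => connWithin_mono_aux Γ v₁ v₂ z w hadj hzv₂ h
  · refine fun h => connWithin_mono_aux Γ v₂ v₁ z w (fun a => hadj a.symm) ?_ h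
    rw [Set.inter_comm]
    exact hzv₁
end
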